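/- In the Set Cover fitness graph, let S ⊆ V be a seed set such that the sets in S∩V₁ cover V₂ (i.e., every e ∈ V₂ belongs to some A ∈ S∩V₁). Then, writing α = ((x/n)/((x/n)+n))^n, the fixation probability satisfies fp_𝒢(S) ≥ ( (y/n²)·α / (1 − (1 − y/n²)·α) )^n. -/

import Mathlib

open Finset
open scoped Classical
set_option linter.unusedSectionVars false
set_option maxHeartbeats 1000000

/-- A fitness graph: a finite strongly connected weighted directed graph together with
mutant and resident fitness functions. `w u v > 0` encodes that `(u,v)` is an edge
of non-zero weight; `w u ·` is a probability distribution. -/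
structure FitnessGraph (V : Type) [Fintype V] [DecidableEq V] where
  w : V → V → ℝ
  m : V → ℝ
  r : V → ℝ
  w_nonneg : ∀ u v, 0 ≤ w u v
  w_rowsum : ∀ u, ∑ v, w u v = 1
  strongly_connected : ∀ u v : V, Relation.ReflTransGen (fun a b => 0 < w a b) u v
  m_pos : ∀ u, 0 < m u
  r_pos : ∀ u, 0 < r u

variable {V : Type} [Fintype V] [DecidableEq V]

/-- A fitness graph is mutant-biased if `m(u) ≥ r(u)` for every node `u`. -/
def FitnessGraph.MutantBiased (G : FitnessGraph V) : Prop :=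
  ∀ u, G.r u ≤ G.m u

/-- The (out-)degree of a node: the number of neighbors along edges of non-zero weight. -/
noncomputable def FitnessGraph.deg (G : FitnessGraph V) (u : V) : ℕ :=
  (Finset.univ.filter fun v => 0 < G.w u v).card

/-- A fitness graph is undirected if its edge relation is symmetric and the weights
are uniform: `w(u,v) = 1/d(u)` for every edge `(u,v)`. -/
def FitnessGraph.Undirected (G : FitnessGraph V) : Prop :=
  (∀ u v, 0 < G.w u v → 0 < G.w v u) ∧
  ∀ u v, 0 < G.w u v → G.w u v = 1 / (G.deg u : ℝ)

/-- The fitness of node `u` in configuration `X`: `m(u)` if `u` is a mutant, `r(u)` otherwise. -/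
def FitnessGraph.fit (G : FitnessGraph V) (X : Finset V) (u : V) : ℝ :=
  if u ∈ X then G.m u else G.r u

/-- Total population fitness in configuration `X`. -/
def FitnessGraph.totalFit (G : FitnessGraph V) (X : Finset V) : ℝ :=
  ∑ u, G.fit X u

/-- The configuration resulting from `X` when `u` reproduces and replaces `v`. -/
def moranNext (X : Finset V) (u v : V) : Finset V :=
  if u ∈ X then insert v X else X.erase v

/-- One-step transition probability of the Heterogeneous Moran process. -/
noncomputable def FitnessGraph.step (G : FitnessGraph V) (X Y : Finset V) : ℝ :=
  ∑ u, ∑ v, (G.fit X u / G.totalFit X) * G.w u v * (if moranNext X u v = Y then 1 else 0)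

/-- `t`-step transition probability of the Heterogeneous Moran process. -/
noncomputable def FitnessGraph.stepN (G : FitnessGraph V) : ℕ → Finset V → Finset V → ℝ
  | 0, X, Y => if X = Y then 1 else 0
  | t + 1, X, Y => ∑ Z, FitnessGraph.stepN G t X Z * G.step Z Y

/-- Fixation probability: the probability that, started from seed set `S`, the process
eventually reaches the all-mutant configuration `V`; since `V` is absorbing this equals
`⨆ t, P(X_t = V)`. -/
noncomputable def FitnessGraph.fp (G : FitnessGraph V) (S : Finset V) : ℝ :=
  ⨆ t : ℕ, G.stepN t S Finset.univ

/-- One-step transition probability of the Moran process stopped upon reaching the set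
of configurations `A` (configurations in `A` are made absorbing). -/
noncomputable def stopStep (G : FitnessGraph V) (A : Set (Finset V)) (X Y : Finset V) : ℝ :=
  if X ∈ A then (if Y = X then 1 else 0) else G.step X Y

/-- `t`-step transition probability of the stopped process. -/
noncomputable def stopStepN (G : FitnessGraph V) (A : Set (Finset V)) :
    ℕ → Finset V → Finset V → ℝ
  | 0, X, Y => if X = Y then 1 else 0
  | t + 1, X, Y => ∑ Z, stopStepN G A t X Z * stopStep G A Z Y

/-- The probability that the Heterogeneous Moran process started at `X0` ever reaches a
configuration in `A`: the supremum over `t` of the probability that the process stopped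
at `A` is in `A` at time `t`. -/
noncomputable def reachProb (G : FitnessGraph V) (A : Set (Finset V)) (X0 : Finset V) : ℝ :=
  ⨆ t : ℕ, ∑ Y ∈ Finset.univ.filter (fun Y => Y ∈ A), stopStepN G A t X0 Y

/-- The Set Cover fitness graph for an instance `(U, 𝒮)` with parameters `x ≥ 1` and
`0 < y ≤ 1`: the vertex set is `V₁ ⊔ V₂` with `V₁ = 𝒮`, `V₂ = U`; there is an edge from
`A ∈ V₁` to each `e ∈ A` and all edges from `V₂` to `V₁`, with uniform weights;
residents have fitness `1` everywhere, mutants have fitness `x` on `V₁` and `y` on `V₂`. -/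
def IsSetCoverGraph {U : Type} [Fintype U] [DecidableEq U] (𝒮 : Finset (Finset U))
    (x y : ℝ) (G : FitnessGraph ({A // A ∈ 𝒮} ⊕ U)) : Prop :=
  (∀ (A : {A // A ∈ 𝒮}) (e : U),
      G.w (Sum.inl A) (Sum.inr e) = if e ∈ A.1 then 1 / (A.1.card : ℝ) else 0) ∧
  (∀ A B : {A // A ∈ 𝒮}, G.w (Sum.inl A) (Sum.inl B) = 0) ∧
  (∀ (e : U) (A : {A // A ∈ 𝒮}), G.w (Sum.inr e) (Sum.inl A) = 1 / (𝒮.card : ℝ)) ∧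
  (∀ e e' : U, G.w (Sum.inr e) (Sum.inr e') = 0) ∧
  (∀ A : {A // A ∈ 𝒮}, G.m (Sum.inl A) = x) ∧
  (∀ e : U, G.m (Sum.inr e) = y) ∧
  (∀ u : {A // A ∈ 𝒮} ⊕ U, G.r u = 1)


/-! ### Auxiliary general lemmas about the Moran process -/

section General

variable (G : FitnessGraph V)

lemma FitnessGraph.fit_pos (X : Finset V) (u : V) : 0 < G.fit X u := by
  unfold FitnessGraph.fit; split
  · exact G.m_pos u
  · exact G.r_pos u

lemma FitnessGraph.totalFit_pos [Nonempty V] (X : Finset V) : 0 < G.totalFit X :=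
  Finset.sum_pos (fun u _ => G.fit_pos X u) Finset.univ_nonempty

lemma FitnessGraph.sum_step_mul [Nonempty V] (X : Finset V) (φ : Finset V → ℝ) :
    ∑ Y, G.step X Y * φ Y
      = ∑ u, ∑ v, (G.fit X u / G.totalFit X) * G.w u v * φ (moranNext X u v) := by
  unfold FitnessGraph.step
  simp_rw [Finset.sum_mul]
  rw [Finset.sum_comm]
  refine Finset.sum_congr rfl fun u _ => ?_
  rw [Finset.sum_comm]
  refine Finset.sum_congr rfl fun v _ => ?_
  simp [mul_ite, ite_mul]

lemma FitnessGraph.step_nonneg [Nonempty V] (X Y : Finset V) : 0 ≤ G.step X Y := by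
  unfold FitnessGraph.step
  refine Finset.sum_nonneg fun u _ => Finset.sum_nonneg fun v _ => ?_
  have h1 : 0 ≤ G.fit X u / G.totalFit X :=
    div_nonneg (G.fit_pos X u).le (G.totalFit_pos X).le
  have h2 : (0:ℝ) ≤ if moranNext X u v = Y then 1 else 0 := by positivity
  exact mul_nonneg (mul_nonneg h1 (G.w_nonneg u v)) h2

lemma FitnessGraph.step_rowsum [Nonempty V] (X : Finset V) : ∑ Y, G.step X Y = 1 := by
  have h := G.sum_step_mul X (fun _ => 1)
  simp only [mul_one] at h
  rw [h]
  have : ∀ u : V, ∑ v, G.fit X u / G.totalFit X * G.w u v = G.fit X u / G.totalFit X := by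
    intro u; rw [← Finset.mul_sum, G.w_rowsum, mul_one]
  simp_rw [this]
  rw [← Finset.sum_div]
  exact div_self (G.totalFit_pos X).ne'

lemma FitnessGraph.stepN_nonneg [Nonempty V] (t : ℕ) (X Y : Finset V) :
    0 ≤ G.stepN t X Y := by
  induction t generalizing X Y with
  | zero => unfold FitnessGraph.stepN; positivity
  | succ t ih =>
    unfold FitnessGraph.stepN
    exact Finset.sum_nonneg fun Z _ => mul_nonneg (ih X Z) (G.step_nonneg Z Y)

lemma FitnessGraph.stepN_rowsum [Nonempty V] (t : ℕ) (X : Finset V) :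
    ∑ Y, G.stepN t X Y = 1 := by
  induction t generalizing X with
  | zero =>
    unfold FitnessGraph.stepN
    simp
  | succ t ih =>
    unfold FitnessGraph.stepN
    rw [Finset.sum_comm]
    have : ∀ Z : Finset V, ∑ Y, G.stepN t X Z * G.step Z Y = G.stepN t X Z := by
      intro Z; rw [← Finset.mul_sum, G.step_rowsum, mul_one]
    simp_rw [this]
    exact ih X

lemma FitnessGraph.stepN_le_one [Nonempty V] (t : ℕ) (X Y : Finset V) :
    G.stepN t X Y ≤ 1 := by
  have h := G.stepN_rowsum t X
  calc G.stepN t X Y ≤ ∑ Z, G.stepN t X Z :=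
        Finset.single_le_sum (fun Z _ => G.stepN_nonneg t X Z) (Finset.mem_univ Y)
    _ = 1 := h

lemma FitnessGraph.stepN_one (X Y : Finset V) : G.stepN 1 X Y = G.step X Y := by
  show ∑ Z, G.stepN 0 X Z * G.step Z Y = G.step X Y
  unfold FitnessGraph.stepN
  simp [Finset.sum_ite_eq]

lemma FitnessGraph.chapman (s t : ℕ) (X Y : Finset V) :
    G.stepN (s + t) X Y = ∑ Z, G.stepN s X Z * G.stepN t Z Y := by
  induction t generalizing Y with
  | zero =>
    show G.stepN s X Y = _
    unfold FitnessGraph.stepN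
    simp [mul_ite, Finset.sum_ite_eq]
  | succ t ih =>
    show ∑ W, G.stepN (s+t) X W * G.step W Y = _
    simp_rw [ih, Finset.sum_mul]
    rw [Finset.sum_comm]
    refine Finset.sum_congr rfl fun Z _ => ?_
    show _ = G.stepN s X Z * ∑ W, G.stepN t Z W * G.step W Y
    rw [Finset.mul_sum]
    exact Finset.sum_congr rfl fun W _ => by ring

lemma FitnessGraph.step_absorbing [Nonempty V] (X : Finset V)
    (h : ∀ u v, moranNext X u v = X) (Y : Finset V) :
    G.step X Y = if X = Y then 1 else 0 := by
  unfold FitnessGraph.step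
  simp_rw [h]
  by_cases hXY : X = Y
  · simp only [hXY, if_true]
    have := G.step_rowsum Y
    unfold FitnessGraph.step at this
    calc ∑ u, ∑ v, G.fit Y u / G.totalFit Y * G.w u v * 1
        = ∑ u, ∑ v, G.fit Y u / G.totalFit Y * G.w u v := by simp
      _ = 1 := by
          have : ∀ u : V, ∑ v, G.fit Y u / G.totalFit Y * G.w u v
              = G.fit Y u / G.totalFit Y := by
            intro u; rw [← Finset.mul_sum, G.w_rowsum, mul_one]
          simp_rw [this]
          rw [← Finset.sum_div]
          exact div_self (G.totalFit_pos Y).ne'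
  · simp [hXY]

lemma moranNext_empty (u v : V) : moranNext (∅ : Finset V) u v = ∅ := by
  simp [moranNext]

lemma moranNext_univ (u v : V) : moranNext (Finset.univ : Finset V) u v = Finset.univ := by
  simp [moranNext]

lemma FitnessGraph.stepN_absorbing [Nonempty V] (X : Finset V)
    (h : ∀ u v, moranNext X u v = X) (t : ℕ) (Y : Finset V) :
    G.stepN t X Y = if X = Y then 1 else 0 := by
  induction t generalizing Y with
  | zero => rfl
  | succ t ih =>
    show ∑ Z, G.stepN t X Z * G.step Z Y = _
    simp_rw [ih]
    simp [Finset.sum_ite_eq, G.step_absorbing X h Y]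

/-- Monotonicity of the expectation of a subharmonic function. -/
lemma FitnessGraph.subharmonic_le [Nonempty V] (φ : Finset V → ℝ)
    (hsub : ∀ X, φ X ≤ ∑ Y, G.step X Y * φ Y) (S : Finset V) (t : ℕ) :
    φ S ≤ ∑ Y, G.stepN t S Y * φ Y := by
  induction t with
  | zero =>
    unfold FitnessGraph.stepN
    simp [Finset.sum_ite_eq]
  | succ t ih =>
    refine ih.trans ?_
    show _ ≤ ∑ Y, (∑ Z, G.stepN t S Z * G.step Z Y) * φ Y
    simp_rw [Finset.sum_mul]
    rw [Finset.sum_comm]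
    refine Finset.sum_le_sum fun Z _ => ?_
    simp_rw [mul_assoc]
    rw [← Finset.mul_sum]
    exact mul_le_mul_of_nonneg_left (hsub Z) (G.stepN_nonneg t S Z)

lemma exists_boundary_edge (X : Finset V) (hne : X.Nonempty) (hnu : X ≠ Finset.univ) :
    ∃ p, p ∉ X ∧ ∃ q, q ∈ X ∧ 0 < G.w p q := by
  obtain ⟨v₀, hv₀⟩ := hne
  have : ∃ u₀, u₀ ∉ X := by
    by_contra h
    push_neg at h
    exact hnu (Finset.eq_univ_iff_forall.mpr h)
  obtain ⟨u₀, hu₀⟩ := this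
  have h := G.strongly_connected u₀ v₀
  clear hnu
  induction h with
  | refl => exact absurd hv₀ hu₀
  | @tail b c hab hbc ih =>
    by_cases hb : b ∈ X
    · exact ih hb
    · exact ⟨b, hb, c, hv₀, hbc⟩

lemma FitnessGraph.single_move_le_step [Nonempty V] (X : Finset V) (p q : V) :
    G.fit X p / G.totalFit X * G.w p q ≤ G.step X (moranNext X p q) := by
  set Y := moranNext X p q with hY
  have hnn : ∀ u v : V,
      0 ≤ G.fit X u / G.totalFit X * G.w u v * (if moranNext X u v = Y then 1 else 0) := by
    intro u v
    have h1 : 0 ≤ G.fit X u / G.totalFit X :=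
      div_nonneg (G.fit_pos X u).le (G.totalFit_pos X).le
    have h2 : (0:ℝ) ≤ if moranNext X u v = Y then 1 else 0 := by positivity
    exact mul_nonneg (mul_nonneg h1 (G.w_nonneg u v)) h2
  unfold FitnessGraph.step
  calc G.fit X p / G.totalFit X * G.w p q
      = G.fit X p / G.totalFit X * G.w p q * (if moranNext X p q = Y then 1 else 0) := by
        rw [if_pos hY.symm.symm]; ring
    _ ≤ ∑ v, G.fit X p / G.totalFit X * G.w p v * (if moranNext X p v = Y then 1 else 0) :=
        Finset.single_le_sum (fun v _ => hnn p v) (Finset.mem_univ q)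
    _ ≤ ∑ u, ∑ v, G.fit X u / G.totalFit X * G.w u v * (if moranNext X u v = Y then 1 else 0) :=
        Finset.single_le_sum (fun u _ => Finset.sum_nonneg fun v _ => hnn u v)
          (Finset.mem_univ p)

lemma FitnessGraph.stepN_card_empty_pos [Nonempty V] :
    ∀ (k : ℕ) (X : Finset V), X.card = k → X ≠ Finset.univ → 0 < G.stepN k X ∅ := by
  intro k
  induction k with
  | zero =>
    intro X hcard _
    have : X = ∅ := Finset.card_eq_zero.mp hcard
    subst this
    norm_num [FitnessGraph.stepN]
  | succ k ih =>
    intro X hcard hnu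
    have hne : X.Nonempty := Finset.card_pos.mp (by omega)
    obtain ⟨p, hp, q, hq, hw⟩ := exists_boundary_edge G X hne hnu
    set X' := X.erase q with hX'
    have hcard' : X'.card = k := by
      rw [hX', Finset.card_erase_of_mem hq, hcard]
      omega
    have hnu' : X' ≠ Finset.univ := by
      intro h
      have h1 : X'.card < X.card := by omega
      have h2 : X.card ≤ X'.card := by
        rw [h]; exact Finset.card_le_univ X
      omega
    have hstep : 0 < G.step X X' := by
      have h1 : moranNext X p q = X' := by simp [moranNext, hp, hX']
      have h2 := G.single_move_le_step X p q
      rw [h1] at h2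
      refine lt_of_lt_of_le ?_ h2
      exact mul_pos (div_pos (G.fit_pos X p) (G.totalFit_pos X)) hw
    have hchap : G.stepN (1 + k) X ∅ = ∑ Z, G.stepN 1 X Z * G.stepN k Z ∅ :=
      G.chapman 1 k X ∅
    have hterm : 0 < G.stepN 1 X X' * G.stepN k X' ∅ := by
      rw [G.stepN_one]
      exact mul_pos hstep (ih X' hcard' hnu')
    have : (1 : ℕ) + k = k + 1 := by omega
    rw [← this]
    rw [hchap]
    refine lt_of_lt_of_le hterm ?_
    exact Finset.single_le_sum (f := fun Z => G.stepN 1 X Z * G.stepN k Z ∅)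
      (fun Z _ => mul_nonneg (G.stepN_nonneg 1 X Z) (G.stepN_nonneg k Z ∅))
      (Finset.mem_univ X')

lemma FitnessGraph.stepN_empty_mono [Nonempty V] (X : Finset V) :
    ∀ s t : ℕ, s ≤ t → G.stepN s X ∅ ≤ G.stepN t X ∅ := by
  intro s t h
  induction t with
  | zero =>
    have : s = 0 := by omega
    subst this; exact le_rfl
  | succ t ih =>
    rcases Nat.lt_or_ge s (t+1) with h' | h'
    · have hst : s ≤ t := by omega
      refine (ih hst).trans ?_
      show G.stepN t X ∅ ≤ ∑ Z : Finset V, G.stepN t X Z * G.step Z ∅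
      have hstep : G.step (∅ : Finset V) ∅ = 1 := by
        rw [G.step_absorbing ∅ moranNext_empty ∅, if_pos rfl]
      calc G.stepN t X ∅ = G.stepN t X ∅ * G.step (∅ : Finset V) ∅ := by rw [hstep, mul_one]
        _ ≤ ∑ Z, G.stepN t X Z * G.step Z ∅ := by
            exact Finset.single_le_sum (f := fun Z => G.stepN t X Z * G.step Z ∅)
              (fun Z _ => mul_nonneg (G.stepN_nonneg t X Z) (G.step_nonneg Z ∅))
              (Finset.mem_univ (∅ : Finset V))
    · have : s = t + 1 := by omega
      subst this; exact le_rfl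

lemma FitnessGraph.stepN_empty_pos [Nonempty V] (X : Finset V) (hnu : X ≠ Finset.univ)
    (t : ℕ) (ht : X.card ≤ t) : 0 < G.stepN t X ∅ :=
  lt_of_lt_of_le (G.stepN_card_empty_pos X.card X rfl hnu) (G.stepN_empty_mono X _ _ ht)

/-- Master lemma: a subharmonic function bounded by `[0,1]` that vanishes at `∅`
lower-bounds the fixation probability. -/
theorem FitnessGraph.le_fp_of_subharmonic [Nonempty V] (φ : Finset V → ℝ)
    (h0 : ∀ X, 0 ≤ φ X) (h1 : ∀ X, φ X ≤ 1) (hempty : φ ∅ = 0)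
    (hsub : ∀ X, φ X ≤ ∑ Y, G.step X Y * φ Y) (S : Finset V) :
    φ S ≤ G.fp S := by
  classical
  set n := Fintype.card V with hn
  set TS : Finset (Finset V) :=
    Finset.univ.filter (fun Y => Y ≠ ∅ ∧ Y ≠ Finset.univ) with hTS
  -- absorbing states give indicator rows
  have habs : ∀ Y : Finset V, Y ∉ TS → ∀ (t : ℕ) (Z : Finset V),
      G.stepN t Y Z = if Y = Z then 1 else 0 := by
    intro Y hY t Z
    have : Y = ∅ ∨ Y = Finset.univ := by
      by_contra h
      push_neg at h
      exact hY (Finset.mem_filter.mpr ⟨Finset.mem_univ Y, h.1.ne_empty, h.2⟩)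
    rcases this with h | h
    · subst h; exact G.stepN_absorbing ∅ moranNext_empty t Z
    · subst h; exact G.stepN_absorbing Finset.univ moranNext_univ t Z
  -- Claim A : φ S ≤ P_t(univ) + transient mass
  have claimA : ∀ t : ℕ, φ S ≤ G.stepN t S Finset.univ + ∑ Y ∈ TS, G.stepN t S Y := by
    intro t
    have h := G.subharmonic_le φ hsub S t
    refine h.trans ?_
    have hsplit := Finset.sum_filter_add_sum_filter_not Finset.univ
      (fun Y => Y ≠ ∅ ∧ Y ≠ Finset.univ) (fun Y => G.stepN t S Y * φ Y)
    have hcompl : Finset.univ.filter (fun Y : Finset V => ¬(Y ≠ ∅ ∧ Y ≠ Finset.univ))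
        = {∅, Finset.univ} := by
      ext Y
      simp only [Finset.mem_filter, Finset.mem_univ, true_and, not_and_or, not_not,
        Finset.mem_insert, Finset.mem_singleton]
    have hne : (∅ : Finset V) ≠ Finset.univ := Ne.symm Finset.univ_nonempty.ne_empty
    have hother : ∑ Y ∈ Finset.univ.filter (fun Y : Finset V => ¬(Y ≠ ∅ ∧ Y ≠ Finset.univ)),
        G.stepN t S Y * φ Y ≤ G.stepN t S Finset.univ := by
      rw [hcompl, Finset.sum_pair hne, hempty, mul_zero, zero_add]
      calc G.stepN t S Finset.univ * φ Finset.univ ≤ G.stepN t S Finset.univ * 1 :=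
            mul_le_mul_of_nonneg_left (h1 _) (G.stepN_nonneg t S _)
        _ = _ := mul_one _
    have htrans : ∑ Y ∈ TS, G.stepN t S Y * φ Y ≤ ∑ Y ∈ TS, G.stepN t S Y := by
      refine Finset.sum_le_sum fun Y _ => ?_
      calc G.stepN t S Y * φ Y ≤ G.stepN t S Y * 1 :=
            mul_le_mul_of_nonneg_left (h1 _) (G.stepN_nonneg t S _)
        _ = _ := mul_one _
    calc ∑ Y, G.stepN t S Y * φ Y
        = ∑ Y ∈ TS, G.stepN t S Y * φ Y
          + ∑ Y ∈ Finset.univ.filter (fun Y : Finset V => ¬(Y ≠ ∅ ∧ Y ≠ Finset.univ)),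
            G.stepN t S Y * φ Y := hsplit.symm
      _ ≤ G.stepN t S Finset.univ + ∑ Y ∈ TS, G.stepN t S Y := by
          rw [add_comm]
          exact add_le_add hother htrans
  -- Claim B : transient mass gets arbitrarily small
  have claimB : ∀ ε : ℝ, 0 < ε → ∃ t : ℕ, ∑ Y ∈ TS, G.stepN t S Y ≤ ε := by
    intro ε hε
    rcases Finset.eq_empty_or_nonempty TS with hTSe | hTSne
    · exact ⟨0, by simp [hTSe, hε.le]⟩
    set ρ : ℝ := TS.sup' hTSne (fun Y => ∑ Z ∈ TS, G.stepN n Y Z) with hρ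
    have hρ0 : 0 ≤ ρ := by
      obtain ⟨Y, hY⟩ := hTSne
      refine le_trans ?_ (Finset.le_sup' _ hY)
      exact Finset.sum_nonneg fun Z _ => G.stepN_nonneg n Y Z
    have hρ1 : ρ < 1 := by
      rw [hρ, Finset.sup'_lt_iff]
      intro Y hY
      have hYmem := Finset.mem_filter.mp hY
      have hpos : 0 < G.stepN n Y ∅ :=
        G.stepN_empty_pos Y hYmem.2.2 n (Finset.card_le_univ Y)
      have hsubset : TS ⊆ Finset.univ.erase ∅ := by
        intro Z hZ
        exact Finset.mem_erase.mpr ⟨(Finset.mem_filter.mp hZ).2.1, Finset.mem_univ Z⟩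
      have h1' : ∑ Z ∈ TS, G.stepN n Y Z ≤ ∑ Z ∈ Finset.univ.erase ∅, G.stepN n Y Z :=
        Finset.sum_le_sum_of_subset_of_nonneg hsubset
          (fun Z _ _ => G.stepN_nonneg n Y Z)
      have h2' : ∑ Z ∈ Finset.univ.erase ∅, G.stepN n Y Z = 1 - G.stepN n Y ∅ := by
        have := Finset.sum_erase_add Finset.univ (fun Z => G.stepN n Y Z)
          (Finset.mem_univ (∅ : Finset V))
        rw [G.stepN_rowsum n Y] at this
        linarith
      linarith
    have hdecay : ∀ k : ℕ, ∑ Y ∈ TS, G.stepN (k * n) S Y ≤ ρ ^ k := by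
      intro k
      induction k with
      | zero =>
        simp only [Nat.zero_mul, pow_zero]
        calc ∑ Y ∈ TS, G.stepN 0 S Y ≤ ∑ Y, G.stepN 0 S Y :=
              Finset.sum_le_sum_of_subset_of_nonneg (Finset.subset_univ TS)
                (fun Y _ _ => G.stepN_nonneg 0 S Y)
          _ = 1 := G.stepN_rowsum 0 S
      | succ k ih =>
        have hrw : (k + 1) * n = k * n + n := Nat.succ_mul k n
        rw [hrw]
        have hch : ∀ Z, G.stepN (k * n + n) S Z = ∑ Y, G.stepN (k*n) S Y * G.stepN n Y Z :=
          fun Z => G.chapman (k*n) n S Z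
        simp_rw [hch]
        rw [Finset.sum_comm]
        have hYbound : ∀ Y : Finset V,
            ∑ Z ∈ TS, G.stepN (k*n) S Y * G.stepN n Y Z
              ≤ G.stepN (k*n) S Y * (if Y ∈ TS then ρ else 0) := by
          intro Y
          rw [← Finset.mul_sum]
          by_cases hY : Y ∈ TS
          · rw [if_pos hY]
            exact mul_le_mul_of_nonneg_left
              (Finset.le_sup' (fun Y => ∑ Z ∈ TS, G.stepN n Y Z) hY)
              (G.stepN_nonneg _ S Y)
          · rw [if_neg hY]
            have : ∑ Z ∈ TS, G.stepN n Y Z = 0 := by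
              refine Finset.sum_eq_zero fun Z hZ => ?_
              rw [habs Y hY n Z, if_neg]
              intro h; subst h; exact hY hZ
            rw [this, mul_zero]
        calc ∑ Y, ∑ Z ∈ TS, G.stepN (k*n) S Y * G.stepN n Y Z
            ≤ ∑ Y, G.stepN (k*n) S Y * (if Y ∈ TS then ρ else 0) :=
              Finset.sum_le_sum fun Y _ => hYbound Y
          _ = ∑ Y ∈ TS, G.stepN (k*n) S Y * ρ := by
              simp only [mul_ite, mul_zero]
              rw [← Finset.sum_filter, Finset.filter_mem_eq_inter, Finset.univ_inter]
          _ = (∑ Y ∈ TS, G.stepN (k*n) S Y) * ρ := by rw [Finset.sum_mul]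
          _ ≤ ρ ^ k * ρ := mul_le_mul_of_nonneg_right ih hρ0
          _ = ρ ^ (k+1) := (pow_succ ρ k).symm
    obtain ⟨k, hk⟩ := exists_pow_lt_of_lt_one hε hρ1
    exact ⟨k * n, (hdecay k).trans hk.le⟩
  -- combine
  have hbdd : BddAbove (Set.range fun t : ℕ => G.stepN t S Finset.univ) := by
    refine ⟨1, ?_⟩
    rintro z ⟨t, rfl⟩
    exact G.stepN_le_one t S Finset.univ
  refine le_of_forall_pos_le_add ?_
  intro ε hε
  obtain ⟨t, ht⟩ := claimB ε hε
  have := claimA t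
  have hle : G.stepN t S Finset.univ ≤ G.fp S := le_ciSup hbdd t
  calc φ S ≤ G.stepN t S Finset.univ + ∑ Y ∈ TS, G.stepN t S Y := claimA t
    _ ≤ G.fp S + ε := add_le_add hle ht

end General

/-! ### Set Cover specific auxiliary definitions -/

section SetCoverAux

variable {U : Type} [Fintype U] [DecidableEq U] (𝒮 : Finset (Finset U))

/-- Number of mutant set-nodes. -/
noncomputable def nA (X : Finset ({A // A ∈ 𝒮} ⊕ U)) : ℕ :=
  (Finset.univ.filter (fun A : {A // A ∈ 𝒮} => Sum.inl A ∈ X)).card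

/-- Number of mutant element-nodes. -/
noncomputable def nB (X : Finset ({A // A ∈ 𝒮} ⊕ U)) : ℕ :=
  (Finset.univ.filter (fun e : U => Sum.inr e ∈ X)).card

/-- The mutant set-nodes of `X` cover the universe. -/
def Cov (X : Finset ({A // A ∈ 𝒮} ⊕ U)) : Prop :=
  ∀ e : U, ∃ A : {A // A ∈ 𝒮}, Sum.inl A ∈ X ∧ e ∈ A.1

/-- The potential function. -/
noncomputable def phi (qa qb : ℝ) (X : Finset ({A // A ∈ 𝒮} ⊕ U)) : ℝ :=
  if Cov 𝒮 X then qa ^ (𝒮.card - nA 𝒮 X) * qb ^ (Fintype.card U - nB 𝒮 X) else 0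

variable {𝒮}

lemma nA_le (X : Finset ({A // A ∈ 𝒮} ⊕ U)) : nA 𝒮 X ≤ 𝒮.card := by
  calc nA 𝒮 X ≤ Fintype.card {A // A ∈ 𝒮} := Finset.card_filter_le _ _
    _ = 𝒮.card := Fintype.card_coe 𝒮

lemma nB_le (X : Finset ({A // A ∈ 𝒮} ⊕ U)) : nB 𝒮 X ≤ Fintype.card U :=
  Finset.card_filter_le _ _

lemma nA_insert_inr (X : Finset ({A // A ∈ 𝒮} ⊕ U)) (e : U) :
    nA 𝒮 (insert (Sum.inr e) X) = nA 𝒮 X := by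
  unfold nA
  congr 1
  ext A
  simp [Finset.mem_insert]

lemma nB_insert_inl (X : Finset ({A // A ∈ 𝒮} ⊕ U)) (B : {A // A ∈ 𝒮}) :
    nB 𝒮 (insert (Sum.inl B) X) = nB 𝒮 X := by
  unfold nB
  congr 1
  ext e
  simp [Finset.mem_insert]

lemma nA_erase_inr (X : Finset ({A // A ∈ 𝒮} ⊕ U)) (e : U) :
    nA 𝒮 (X.erase (Sum.inr e)) = nA 𝒮 X := by
  unfold nA
  congr 1
  ext A
  simp [Finset.mem_erase]

lemma nB_erase_inl (X : Finset ({A // A ∈ 𝒮} ⊕ U)) (B : {A // A ∈ 𝒮}) :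
    nB 𝒮 (X.erase (Sum.inl B)) = nB 𝒮 X := by
  unfold nB
  congr 1
  ext e
  simp [Finset.mem_erase]

lemma nB_insert_inr (X : Finset ({A // A ∈ 𝒮} ⊕ U)) (e : U) (he : Sum.inr e ∉ X) :
    nB 𝒮 (insert (Sum.inr e) X) = nB 𝒮 X + 1 := by
  unfold nB
  have h : Finset.univ.filter (fun e' : U => Sum.inr e' ∈ insert (Sum.inr e) X)
      = insert e (Finset.univ.filter (fun e' : U => Sum.inr e' ∈ X)) := by
    ext e'
    simp [Finset.mem_insert, Sum.inr.injEq, eq_comm]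
  rw [h, Finset.card_insert_of_notMem (by simp [he])]

lemma nA_insert_inl (X : Finset ({A // A ∈ 𝒮} ⊕ U)) (B : {A // A ∈ 𝒮})
    (hB : Sum.inl B ∉ X) :
    nA 𝒮 (insert (Sum.inl B) X) = nA 𝒮 X + 1 := by
  unfold nA
  have h : Finset.univ.filter (fun A : {A // A ∈ 𝒮} => Sum.inl A ∈ insert (Sum.inl B) X)
      = insert B (Finset.univ.filter (fun A : {A // A ∈ 𝒮} => Sum.inl A ∈ X)) := by
    ext A
    simp [Finset.mem_insert, Sum.inl.injEq, eq_comm]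
  rw [h, Finset.card_insert_of_notMem (by simp [hB])]

lemma nB_erase_inr' (X : Finset ({A // A ∈ 𝒮} ⊕ U)) (e : U) (he : Sum.inr e ∈ X) :
    nB 𝒮 (X.erase (Sum.inr e)) + 1 = nB 𝒮 X := by
  unfold nB
  have h : Finset.univ.filter (fun e' : U => Sum.inr e' ∈ X)
      = insert e (Finset.univ.filter (fun e' : U => Sum.inr e' ∈ X.erase (Sum.inr e))) := by
    ext e'
    simp only [Finset.mem_filter, Finset.mem_univ, true_and, Finset.mem_insert,
      Finset.mem_erase, Sum.inr.injEq]
    constructor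
    · intro h'
      by_cases he' : e' = e
      · exact Or.inl he'
      · exact Or.inr ⟨fun hc => he' (Sum.inr.inj hc), h'⟩
    · rintro (rfl | ⟨_, h'⟩)
      · exact he
      · exact h'
  rw [h, Finset.card_insert_of_notMem (by simp)]

lemma cov_insert {X : Finset ({A // A ∈ 𝒮} ⊕ U)} (hC : Cov 𝒮 X)
    (v : {A // A ∈ 𝒮} ⊕ U) : Cov 𝒮 (insert v X) := by
  intro e
  obtain ⟨A, hA, hAe⟩ := hC e
  exact ⟨A, Finset.mem_insert_of_mem hA, hAe⟩

lemma cov_erase_inr {X : Finset ({A // A ∈ 𝒮} ⊕ U)} (hC : Cov 𝒮 X) (e : U) :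
    Cov 𝒮 (X.erase (Sum.inr e)) := by
  intro e'
  obtain ⟨A, hA, hAe⟩ := hC e'
  exact ⟨A, Finset.mem_erase.mpr ⟨by simp, hA⟩, hAe⟩

lemma phi_nonneg (qa qb : ℝ) (h1 : 0 ≤ qa) (h2 : 0 ≤ qb) (X : Finset ({A // A ∈ 𝒮} ⊕ U)) :
    0 ≤ phi 𝒮 qa qb X := by
  unfold phi
  split
  · positivity
  · exact le_rfl

lemma phi_le_one (qa qb : ℝ) (h1 : 0 ≤ qa) (h1' : qa ≤ 1) (h2 : 0 ≤ qb) (h2' : qb ≤ 1)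
    (X : Finset ({A // A ∈ 𝒮} ⊕ U)) : phi 𝒮 qa qb X ≤ 1 := by
  unfold phi
  split
  · exact mul_le_one₀ (pow_le_one₀ h1 h1') (by positivity) (pow_le_one₀ h2 h2')
  · norm_num

lemma phi_empty [Nonempty U] (qa qb : ℝ) : phi 𝒮 qa qb (∅ : Finset ({A // A ∈ 𝒮} ⊕ U)) = 0 := by
  unfold phi
  rw [if_neg]
  intro h
  obtain ⟨A, hA, _⟩ := h (Classical.arbitrary U)
  exact Finset.notMem_empty _ hA

end SetCoverAux

/-- The potential `phi` is subharmonic for the Set Cover Moran process. -/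
lemma phi_subharmonic {U : Type} [Fintype U] [DecidableEq U] [Nonempty U]
    {𝒮 : Finset (Finset U)} {x y : ℝ} {G : FitnessGraph ({A // A ∈ 𝒮} ⊕ U)}
    (hne : ∀ A ∈ 𝒮, A.Nonempty) (hcov : ∀ e : U, ∃ A ∈ 𝒮, e ∈ A)
    (hx : 1 ≤ x) (hy0 : 0 < y) (hy1 : y ≤ 1) (hG : IsSetCoverGraph 𝒮 x y G)
    (N M : ℝ) (hN : N = ((𝒮.card + Fintype.card U : ℕ) : ℝ)) (hM : M = (𝒮.card : ℝ))
    (qa qb : ℝ) (hqa : qa = y*(x+N) / (y*(x+N) + M*N)) (hqb : qb = x / (x+N))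
    (X : Finset ({A // A ∈ 𝒮} ⊕ U)) :
    phi 𝒮 qa qb X ≤ ∑ Y, G.step X Y * phi 𝒮 qa qb Y := by
  classical
  obtain ⟨hw1, hw2, hw3, hw4, hm1, hm2, hr⟩ := hG
  have hNEU : Nonempty ({A // A ∈ 𝒮} ⊕ U) := ⟨Sum.inr (Classical.arbitrary U)⟩
  have hScard : 0 < 𝒮.card := by
    obtain ⟨A, hA, _⟩ := hcov (Classical.arbitrary U)
    exact Finset.card_pos.mpr ⟨A, hA⟩
  have hM1 : 1 ≤ M := by rw [hM]; exact_mod_cast hScard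
  have hU1 : (1:ℝ) ≤ (Fintype.card U : ℝ) := by exact_mod_cast Fintype.card_pos
  have hNMU : N = M + (Fintype.card U : ℝ) := by rw [hN, hM]; push_cast; ring
  have hN0 : 0 < N := by rw [hNMU]; linarith
  have hx0 : 0 < x := lt_of_lt_of_le one_pos hx
  have hxN0 : 0 < x + N := by linarith
  have hM0 : 0 < M := by linarith
  have hda : 0 < y*(x+N) + M*N := by positivity
  have hqb0 : 0 < qb := by rw [hqb]; exact div_pos hx0 hxN0
  have hqb1 : qb ≤ 1 := by rw [hqb]; exact div_le_one_of_le₀ (by linarith) hxN0.le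
  have hqa0 : 0 < qa := by rw [hqa]; exact div_pos (by positivity) hda
  have hqa1 : qa ≤ 1 := by
    rw [hqa]; refine div_le_one_of_le₀ ?_ hda.le; nlinarith
  have h1mqb : 1 - qb = N/(x+N) := by rw [hqb]; field_simp; ring
  have hxqb : x*(1-qb) = qb*N := by rw [h1mqb, hqb]; field_simp
  have hIdent : (y/M)*(1-qa) = qa*(1-qb) := by
    rw [hqa, hqb]; field_simp; ring
  set cU := Fintype.card U with hcU
  have hF : 0 < G.totalFit X := G.totalFit_pos X
  rw [G.sum_step_mul X]
  by_cases hC : Cov 𝒮 X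
  case neg =>
    rw [phi, if_neg hC]
    refine Finset.sum_nonneg fun u _ => Finset.sum_nonneg fun v _ => ?_
    refine mul_nonneg (mul_nonneg ?_ (G.w_nonneg u v)) ?_
    · exact div_nonneg (G.fit_pos X u).le hF.le
    · exact phi_nonneg qa qb hqa0.le hqb0.le _
  case pos =>
  set a := nA 𝒮 X with ha
  set b := nB 𝒮 X with hb
  have haM : a ≤ 𝒮.card := nA_le X
  have hbU : b ≤ cU := nB_le X
  set P := qa^(𝒮.card - a) * qb^(cU - b) with hPdef
  have hphiX : phi 𝒮 qa qb X = P := by rw [phi, if_pos hC]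
  have hP0 : 0 ≤ P := by positivity
  set Dgb := qa^(𝒮.card - a)*qb^(cU - b - 1) - P with hDgb
  set Dga := qa^(𝒮.card - a - 1)*qb^(cU - b) - P with hDga
  have hDgb0 : 0 ≤ Dgb := by
    rw [hDgb, hPdef, sub_nonneg]
    exact mul_le_mul_of_nonneg_left
      (pow_le_pow_of_le_one hqb0.le hqb1 (Nat.sub_le _ _)) (by positivity)
  -- value lemmas
  have hval_gb : ∀ e : U, Sum.inr e ∉ X →
      phi 𝒮 qa qb (insert (Sum.inr e) X) = qa^(𝒮.card - a)*qb^(cU - b - 1) := by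
    intro e he
    rw [phi, if_pos (cov_insert hC _), nA_insert_inr, nB_insert_inr X e he, ← ha, ← hb,
      ← hcU, Nat.sub_sub]
  have hval_lb : ∀ e : U, Sum.inr e ∈ X →
      phi 𝒮 qa qb (X.erase (Sum.inr e)) = qa^(𝒮.card - a)*qb^((cU - b) + 1) := by
    intro e he
    have h1 := nB_erase_inr' X e he
    rw [phi, if_pos (cov_erase_inr hC e), nA_erase_inr, ← ha, ← hcU]
    have h2 : cU - nB 𝒮 (X.erase (Sum.inr e)) = (cU - b) + 1 := by
      have h3 : nB 𝒮 (X.erase (Sum.inr e)) ≤ cU := nB_le _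
      omega
    rw [h2]
  have hval_ga : ∀ B : {A // A ∈ 𝒮}, Sum.inl B ∉ X →
      phi 𝒮 qa qb (insert (Sum.inl B) X) = qa^(𝒮.card - a - 1)*qb^(cU - b) := by
    intro B hB
    rw [phi, if_pos (cov_insert hC _), nA_insert_inl X B hB, nB_insert_inl, ← ha, ← hb,
      ← hcU, Nat.sub_sub]
  -- row computations for set-nodes
  have hTa : ∀ A : {A // A ∈ 𝒮},
      (∑ e : U, G.fit X (Sum.inl A) * G.w (Sum.inl A) (Sum.inr e) *
        (phi 𝒮 qa qb (moranNext X (Sum.inl A) (Sum.inr e)) - P))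
      = if Sum.inl A ∈ X
          then (x / (A.1.card:ℝ)) * ((A.1.filter (fun e => Sum.inr e ∉ X)).card : ℝ) * Dgb
          else -(((A.1.filter (fun e => Sum.inr e ∈ X)).card : ℝ) / (A.1.card:ℝ)
                  * (P * (1 - qb))) := by
    intro A
    have hApos : 0 < A.1.card := Finset.card_pos.mpr (hne A.1 A.2)
    by_cases hA : Sum.inl A ∈ X
    · rw [if_pos hA]
      have hfit : G.fit X (Sum.inl A) = x := by
        unfold FitnessGraph.fit; rw [if_pos hA, hm1]
      have hterm : ∀ e : U, G.fit X (Sum.inl A) * G.w (Sum.inl A) (Sum.inr e) *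
          (phi 𝒮 qa qb (moranNext X (Sum.inl A) (Sum.inr e)) - P)
          = if e ∈ A.1.filter (fun e => Sum.inr e ∉ X)
              then x * (1/(A.1.card:ℝ)) * Dgb else 0 := by
        intro e
        have hnext : moranNext X (Sum.inl A) (Sum.inr e) = insert (Sum.inr e) X := by
          simp [moranNext, hA]
        rw [hfit, hw1, hnext]
        by_cases he1 : e ∈ A.1
        · by_cases he2 : Sum.inr e ∈ X
          · rw [Finset.insert_eq_self.mpr he2, hphiX, if_pos he1,
              if_neg (by simp [he2] : e ∉ A.1.filter (fun e => Sum.inr e ∉ X))]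
            ring
          · rw [if_pos he1, hval_gb e he2,
              if_pos (Finset.mem_filter.mpr ⟨he1, he2⟩), ← hDgb]
        · rw [if_neg he1, if_neg (by simp [he1])]
          ring
      rw [Finset.sum_congr rfl (fun e _ => hterm e), Finset.sum_ite_mem,
        Finset.univ_inter, Finset.sum_const, nsmul_eq_mul]
      ring
    · rw [if_neg hA]
      have hfit : G.fit X (Sum.inl A) = 1 := by
        unfold FitnessGraph.fit; rw [if_neg hA, hr]
      have hterm : ∀ e : U, G.fit X (Sum.inl A) * G.w (Sum.inl A) (Sum.inr e) *
          (phi 𝒮 qa qb (moranNext X (Sum.inl A) (Sum.inr e)) - P)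
          = if e ∈ A.1.filter (fun e => Sum.inr e ∈ X)
              then (1/(A.1.card:ℝ)) * (-(P * (1 - qb))) else 0 := by
        intro e
        have hnext : moranNext X (Sum.inl A) (Sum.inr e) = X.erase (Sum.inr e) := by
          simp [moranNext, hA]
        rw [hfit, hw1, hnext]
        by_cases he1 : e ∈ A.1
        · by_cases he2 : Sum.inr e ∈ X
          · rw [if_pos he1, hval_lb e he2, if_pos (Finset.mem_filter.mpr ⟨he1, he2⟩),
              pow_succ, hPdef]
            ring
          · rw [Finset.erase_eq_of_notMem he2, hphiX, if_pos he1,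
              if_neg (by simp [he2] : e ∉ A.1.filter (fun e => Sum.inr e ∈ X))]
            ring
        · rw [if_neg he1, if_neg (by simp [he1])]
          ring
      rw [Finset.sum_congr rfl (fun e _ => hterm e), Finset.sum_ite_mem,
        Finset.univ_inter, Finset.sum_const, nsmul_eq_mul]
      ring
  -- counts of set-nodes
  have hcntA : (Finset.univ.filter (fun B : {A // A ∈ 𝒮} => Sum.inl B ∉ X)).card
      = 𝒮.card - a := by
    have h1 := Finset.card_filter_add_card_filter_not
      (s := (Finset.univ : Finset {A // A ∈ 𝒮}))
      (p := fun B : {A // A ∈ 𝒮} => Sum.inl B ∈ X)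
    rw [Finset.card_univ, Fintype.card_coe] at h1
    have h2 : (Finset.univ.filter (fun B : {A // A ∈ 𝒮} => Sum.inl B ∈ X)).card = a := rfl
    omega
  -- row bounds for element-nodes
  have hTb : ∀ e : U,
      (if Sum.inr e ∈ X then ((𝒮.card - a : ℕ):ℝ) * ((y/M) * Dga)
        else -((a:ℝ) * ((1/M) * P)))
      ≤ ∑ B : {A // A ∈ 𝒮}, G.fit X (Sum.inr e) * G.w (Sum.inr e) (Sum.inl B) *
          (phi 𝒮 qa qb (moranNext X (Sum.inr e) (Sum.inl B)) - P) := by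
    intro e
    by_cases hE : Sum.inr e ∈ X
    · rw [if_pos hE]
      have hfit : G.fit X (Sum.inr e) = y := by
        unfold FitnessGraph.fit; rw [if_pos hE, hm2]
      have hterm : ∀ B : {A // A ∈ 𝒮}, G.fit X (Sum.inr e) * G.w (Sum.inr e) (Sum.inl B) *
          (phi 𝒮 qa qb (moranNext X (Sum.inr e) (Sum.inl B)) - P)
          = if B ∈ Finset.univ.filter (fun B : {A // A ∈ 𝒮} => Sum.inl B ∉ X)
              then y * (1/M) * Dga else 0 := by
        intro B
        have hnext : moranNext X (Sum.inr e) (Sum.inl B) = insert (Sum.inl B) X := by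
          simp [moranNext, hE]
        rw [hfit, hw3, hnext, ← hM]
        by_cases hB : Sum.inl B ∈ X
        · rw [Finset.insert_eq_self.mpr hB, hphiX, if_neg (by simp [hB])]
          ring
        · rw [hval_ga B hB, if_pos (Finset.mem_filter.mpr ⟨Finset.mem_univ B, hB⟩), ← hDga]
      refine le_of_eq ?_
      rw [Finset.sum_congr rfl (fun B _ => hterm B), Finset.sum_ite_mem,
        Finset.univ_inter, Finset.sum_const, nsmul_eq_mul, hcntA]
      ring
    · rw [if_neg hE]
      have hfit : G.fit X (Sum.inr e) = 1 := by
        unfold FitnessGraph.fit; rw [if_neg hE, hr]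
      have hterm : ∀ B : {A // A ∈ 𝒮},
          (if B ∈ Finset.univ.filter (fun B : {A // A ∈ 𝒮} => Sum.inl B ∈ X)
            then (1/M) * (-P) else 0)
          ≤ G.fit X (Sum.inr e) * G.w (Sum.inr e) (Sum.inl B) *
            (phi 𝒮 qa qb (moranNext X (Sum.inr e) (Sum.inl B)) - P) := by
        intro B
        have hnext : moranNext X (Sum.inr e) (Sum.inl B) = X.erase (Sum.inl B) := by
          simp [moranNext, hE]
        rw [hfit, hw3, hnext, ← hM]
        by_cases hB : Sum.inl B ∈ X
        · rw [if_pos (Finset.mem_filter.mpr ⟨Finset.mem_univ B, hB⟩)]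
          have hphin : 0 ≤ phi 𝒮 qa qb (X.erase (Sum.inl B)) :=
            phi_nonneg qa qb hqa0.le hqb0.le _
          have : (1/M) * (-P) ≤ (1/M) * (phi 𝒮 qa qb (X.erase (Sum.inl B)) - P) := by
            refine mul_le_mul_of_nonneg_left ?_ (by positivity)
            linarith
          calc (1/M) * (-P) ≤ (1/M) * (phi 𝒮 qa qb (X.erase (Sum.inl B)) - P) := this
            _ = 1 * (1/M) * (phi 𝒮 qa qb (X.erase (Sum.inl B)) - P) := by ring
        · rw [Finset.erase_eq_of_notMem hB, hphiX, if_neg (by simp [hB])]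
          ring_nf
          exact le_rfl
      calc -((a:ℝ) * ((1/M) * P))
          = ∑ B : {A // A ∈ 𝒮},
              (if B ∈ Finset.univ.filter (fun B : {A // A ∈ 𝒮} => Sum.inl B ∈ X)
                then (1/M) * (-P) else 0) := by
            rw [Finset.sum_ite_mem, Finset.univ_inter, Finset.sum_const, nsmul_eq_mul]
            have h2 : (Finset.univ.filter (fun B : {A // A ∈ 𝒮} => Sum.inl B ∈ X)).card
                = a := rfl
            rw [h2]; ring
        _ ≤ _ := Finset.sum_le_sum fun B _ => hterm B
  -- split the A-row sum
  set S1 := ∑ A : {A // A ∈ 𝒮}, (if Sum.inl A ∈ X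
      then (x / (A.1.card:ℝ)) * ((A.1.filter (fun e => Sum.inr e ∉ X)).card : ℝ) * Dgb
      else 0) with hS1
  set S2 := ∑ A : {A // A ∈ 𝒮}, (if Sum.inl A ∈ X then 0
      else ((A.1.filter (fun e => Sum.inr e ∈ X)).card : ℝ) / (A.1.card:ℝ)
        * (P * (1 - qb))) with hS2
  have hTa' : (∑ A : {A // A ∈ 𝒮}, ∑ e : U,
        G.fit X (Sum.inl A) * G.w (Sum.inl A) (Sum.inr e) *
        (phi 𝒮 qa qb (moranNext X (Sum.inl A) (Sum.inr e)) - P)) = S1 - S2 := by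
    rw [hS1, hS2, ← Finset.sum_sub_distrib]
    refine Finset.sum_congr rfl fun A _ => ?_
    rw [hTa A]
    by_cases hA : Sum.inl A ∈ X <;> simp [hA]
  -- count of uncovered elements
  have hnotb : (Finset.univ.filter (fun e : U => Sum.inr e ∉ X)).card = cU - b := by
    have h1 := Finset.card_filter_add_card_filter_not
      (s := (Finset.univ : Finset U)) (p := fun e : U => Sum.inr e ∈ X)
    rw [Finset.card_univ] at h1
    have h2 : (Finset.univ.filter (fun e : U => Sum.inr e ∈ X)).card = b := rfl
    omega
  have hcovcount : ((cU - b : ℕ):ℝ)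
      ≤ ∑ A : {A // A ∈ 𝒮}, (if Sum.inl A ∈ X
          then ((A.1.filter (fun e => Sum.inr e ∉ X)).card : ℝ) else 0) := by
    have hsubset : (Finset.univ.filter (fun e : U => Sum.inr e ∉ X))
        ⊆ (Finset.univ.filter (fun A : {A // A ∈ 𝒮} => Sum.inl A ∈ X)).biUnion
            (fun A => A.1.filter (fun e => Sum.inr e ∉ X)) := by
      intro e he
      have he' : Sum.inr e ∉ X := (Finset.mem_filter.mp he).2
      obtain ⟨A, hA1, hA2⟩ := hC e
      exact Finset.mem_biUnion.mpr ⟨A, Finset.mem_filter.mpr ⟨Finset.mem_univ A, hA1⟩,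
        Finset.mem_filter.mpr ⟨hA2, he'⟩⟩
    have hnat : cU - b ≤ ∑ A ∈ Finset.univ.filter (fun A : {A // A ∈ 𝒮} => Sum.inl A ∈ X),
        (A.1.filter (fun e => Sum.inr e ∉ X)).card := by
      calc cU - b = (Finset.univ.filter (fun e : U => Sum.inr e ∉ X)).card := hnotb.symm
        _ ≤ ((Finset.univ.filter (fun A : {A // A ∈ 𝒮} => Sum.inl A ∈ X)).biUnion
              (fun A => A.1.filter (fun e => Sum.inr e ∉ X))).card :=
            Finset.card_le_card hsubset
        _ ≤ _ := Finset.card_biUnion_le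
    calc ((cU - b : ℕ):ℝ)
        ≤ ((∑ A ∈ Finset.univ.filter (fun A : {A // A ∈ 𝒮} => Sum.inl A ∈ X),
            (A.1.filter (fun e => Sum.inr e ∉ X)).card : ℕ) : ℝ) := by exact_mod_cast hnat
      _ = ∑ A : {A // A ∈ 𝒮}, (if Sum.inl A ∈ X
            then ((A.1.filter (fun e => Sum.inr e ∉ X)).card : ℝ) else 0) := by
          rw [Nat.cast_sum, Finset.sum_filter]
  -- Claim 1
  have claim1 : ((cU - b : ℕ):ℝ) * P ≤ S1 := by
    rcases Nat.eq_or_lt_of_le hbU with heq | hlt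
    · have h0 : ((cU - b : ℕ):ℝ) = 0 := by
        rw [heq]; simp
      rw [h0, zero_mul, hS1]
      refine Finset.sum_nonneg fun A _ => ?_
      split
      · have hApos : 0 < A.1.card := Finset.card_pos.mpr (hne A.1 A.2)
        have hcA0 : (0:ℝ) ≤ A.1.card := by positivity
        exact mul_nonneg (mul_nonneg (div_nonneg hx0.le hcA0) (by positivity)) hDgb0
      · exact le_rfl
    · set E := qa^(𝒮.card - a)*qb^(cU - b - 1) with hE
      have hE0 : 0 ≤ E := by positivity
      have hexpb : (cU - b - 1) + 1 = cU - b := by omega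
      have hPE : P = E * qb := by
        rw [hPdef, hE, mul_assoc, ← pow_succ, hexpb]
      have hDgbE : Dgb = E * (1 - qb) := by
        rw [hDgb, hPE, hE]; ring
      have hterm1 : ∀ A : {A // A ∈ 𝒮}, Sum.inl A ∈ X →
          qb * E * ((A.1.filter (fun e => Sum.inr e ∉ X)).card : ℝ)
          ≤ (x / (A.1.card:ℝ)) * ((A.1.filter (fun e => Sum.inr e ∉ X)).card : ℝ) * Dgb := by
        intro A _
        have hApos : 0 < A.1.card := Finset.card_pos.mpr (hne A.1 A.2)
        have hcA0 : (0:ℝ) < A.1.card := by exact_mod_cast hApos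
        have hcAN : (A.1.card : ℝ) ≤ N := by
          rw [hNMU]
          have : A.1.card ≤ cU := Finset.card_le_card (Finset.subset_univ A.1) |>.trans
            (le_of_eq (Finset.card_univ))
          calc (A.1.card : ℝ) ≤ (cU : ℝ) := by exact_mod_cast this
            _ ≤ M + (Fintype.card U : ℝ) := by rw [hcU]; linarith
        set cnt := ((A.1.filter (fun e => Sum.inr e ∉ X)).card : ℝ) with hcnt
        have hcnt0 : 0 ≤ cnt := by positivity
        rw [hDgbE]
        have heq1 : (x / (A.1.card:ℝ)) * cnt * (E * (1 - qb))
            = (x*(1-qb)) * E * cnt / (A.1.card:ℝ) := by ring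
        rw [heq1, hxqb]
        rw [le_div_iff₀ hcA0]
        have h2 : qb * E * cnt * (A.1.card:ℝ) ≤ qb * E * cnt * N :=
          mul_le_mul_of_nonneg_left hcAN (by positivity)
        calc qb * E * cnt * (A.1.card:ℝ) ≤ qb * E * cnt * N := h2
          _ = qb * N * E * cnt := by ring
      calc ((cU - b : ℕ):ℝ) * P = qb * E * ((cU - b : ℕ):ℝ) := by rw [hPE]; ring
        _ ≤ qb * E * (∑ A : {A // A ∈ 𝒮}, (if Sum.inl A ∈ X
              then ((A.1.filter (fun e => Sum.inr e ∉ X)).card : ℝ) else 0)) :=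
            mul_le_mul_of_nonneg_left hcovcount (by positivity)
        _ = ∑ A : {A // A ∈ 𝒮}, qb * E * (if Sum.inl A ∈ X
              then ((A.1.filter (fun e => Sum.inr e ∉ X)).card : ℝ) else 0) :=
            Finset.mul_sum _ _ _
        _ ≤ S1 := by
            rw [hS1]
            refine Finset.sum_le_sum fun A _ => ?_
            by_cases hA : Sum.inl A ∈ X
            · rw [if_pos hA, if_pos hA]
              exact hterm1 A hA
            · rw [if_neg hA, if_neg hA, mul_zero]
  -- Claim 2
  have claim2 : S2 ≤ (b:ℝ) * (((𝒮.card - a : ℕ):ℝ) * ((y/M) * Dga)) := by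
    have hstep1 : S2 ≤ ((𝒮.card - a : ℕ):ℝ) * ((b:ℝ) * (P * (1 - qb))) := by
      have hterm : ∀ A : {A // A ∈ 𝒮},
          (if Sum.inl A ∈ X then 0
            else ((A.1.filter (fun e => Sum.inr e ∈ X)).card : ℝ) / (A.1.card:ℝ)
              * (P * (1 - qb)))
          ≤ (if Sum.inl A ∈ X then 0 else (b:ℝ) * (P * (1 - qb))) := by
        intro A
        by_cases hA : Sum.inl A ∈ X
        · rw [if_pos hA, if_pos hA]
        · rw [if_neg hA, if_neg hA]
          have hApos : 0 < A.1.card := Finset.card_pos.mpr (hne A.1 A.2)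
          have hcA0 : (0:ℝ) < A.1.card := by exact_mod_cast hApos
          refine mul_le_mul_of_nonneg_right ?_ (mul_nonneg hP0 (by linarith))
          rcases Nat.eq_zero_or_pos b with hb0 | hb1
          · have hfil : (A.1.filter (fun e => Sum.inr e ∈ X)).card = 0 := by
              rw [Finset.card_eq_zero]
              by_contra hcon
              obtain ⟨e, hemem⟩ := Finset.nonempty_iff_ne_empty.mpr hcon
              have : Sum.inr e ∈ X := (Finset.mem_filter.mp hemem).2
              have : e ∈ Finset.univ.filter (fun e : U => Sum.inr e ∈ X) :=
                Finset.mem_filter.mpr ⟨Finset.mem_univ e, this⟩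
              have hbpos : 0 < b := Finset.card_pos.mpr ⟨e, this⟩
              omega
            rw [hfil]
            simp [hb0]
          · have h1 : ((A.1.filter (fun e => Sum.inr e ∈ X)).card : ℝ) / (A.1.card:ℝ) ≤ 1 := by
              rw [div_le_one hcA0]
              exact_mod_cast Finset.card_filter_le _ _
            have h2 : (1:ℝ) ≤ (b:ℝ) := by exact_mod_cast hb1
            linarith
      calc S2 ≤ ∑ A : {A // A ∈ 𝒮}, (if Sum.inl A ∈ X then 0 else (b:ℝ) * (P * (1 - qb))) :=
            Finset.sum_le_sum fun A _ => hterm A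
        _ = ((𝒮.card - a : ℕ):ℝ) * ((b:ℝ) * (P * (1 - qb))) := by
            rw [Finset.sum_ite, Finset.sum_const_zero, zero_add, Finset.sum_const,
              nsmul_eq_mul, hcntA]
    refine hstep1.trans (le_of_eq ?_)
    rcases Nat.eq_or_lt_of_le haM with heq | hlt
    · have h0 : ((𝒮.card - a : ℕ):ℝ) = 0 := by rw [heq]; simp
      rw [h0]; ring
    · set Ea := qa^(𝒮.card - a - 1)*qb^(cU - b) with hEa
      have hexpa : (𝒮.card - a - 1) + 1 = 𝒮.card - a := by omega
      have hPEa : P = Ea * qa := by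
        rw [hPdef, hEa]
        calc qa ^ (𝒮.card - a) * qb ^ (cU - b)
            = qa ^ ((𝒮.card - a - 1) + 1) * qb ^ (cU - b) := by rw [hexpa]
          _ = qa ^ (𝒮.card - a - 1) * qb ^ (cU - b) * qa := by rw [pow_succ]; ring
      have hDgaE : Dga = Ea * (1 - qa) := by rw [hDga, hPEa, hEa]; ring
      have hkey : (y/M) * Dga = P * (1 - qb) := by
        rw [hDgaE, hPEa]
        calc (y/M) * (Ea * (1 - qa)) = ((y/M) * (1 - qa)) * Ea := by ring
          _ = (qa * (1 - qb)) * Ea := by rw [hIdent]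
          _ = Ea * qa * (1 - qb) := by ring
      rw [hkey]; ring
  -- main nonnegativity
  have main : 0 ≤ ∑ u, ∑ v, G.fit X u * G.w u v * (phi 𝒮 qa qb (moranNext X u v) - P) := by
    rw [Fintype.sum_sum_type]
    have hsplitv : ∀ u : {A // A ∈ 𝒮} ⊕ U,
        (∑ v, G.fit X u * G.w u v * (phi 𝒮 qa qb (moranNext X u v) - P))
        = (∑ B : {A // A ∈ 𝒮}, G.fit X u * G.w u (Sum.inl B) *
            (phi 𝒮 qa qb (moranNext X u (Sum.inl B)) - P))
          + ∑ e : U, G.fit X u * G.w u (Sum.inr e) *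
            (phi 𝒮 qa qb (moranNext X u (Sum.inr e)) - P) := fun u =>
      Fintype.sum_sum_type _
    simp_rw [hsplitv]
    have hzero1 : ∀ A : {A // A ∈ 𝒮},
        (∑ B : {A // A ∈ 𝒮}, G.fit X (Sum.inl A) * G.w (Sum.inl A) (Sum.inl B) *
          (phi 𝒮 qa qb (moranNext X (Sum.inl A) (Sum.inl B)) - P)) = 0 := by
      intro A
      refine Finset.sum_eq_zero fun B _ => ?_
      rw [hw2, mul_zero, zero_mul]
    have hzero2 : ∀ e : U,
        (∑ e' : U, G.fit X (Sum.inr e) * G.w (Sum.inr e) (Sum.inr e') *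
          (phi 𝒮 qa qb (moranNext X (Sum.inr e) (Sum.inr e')) - P)) = 0 := by
      intro e
      refine Finset.sum_eq_zero fun e' _ => ?_
      rw [hw4, mul_zero, zero_mul]
    simp_rw [hzero1, hzero2, zero_add, add_zero]
    rw [hTa']
    have hTbsum : ∑ e : U, (if Sum.inr e ∈ X then ((𝒮.card - a : ℕ):ℝ) * ((y/M) * Dga)
          else -((a:ℝ) * ((1/M) * P)))
        ≤ ∑ e : U, ∑ B : {A // A ∈ 𝒮}, G.fit X (Sum.inr e) * G.w (Sum.inr e) (Sum.inl B) *
          (phi 𝒮 qa qb (moranNext X (Sum.inr e) (Sum.inl B)) - P) :=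
      Finset.sum_le_sum fun e _ => hTb e
    have hsumIte : ∑ e : U, (if Sum.inr e ∈ X then ((𝒮.card - a : ℕ):ℝ) * ((y/M) * Dga)
          else -((a:ℝ) * ((1/M) * P)))
        = (b:ℝ) * (((𝒮.card - a : ℕ):ℝ) * ((y/M) * Dga))
          - ((cU - b : ℕ):ℝ) * ((a:ℝ) * ((1/M) * P)) := by
      rw [Finset.sum_ite, Finset.sum_const, Finset.sum_const, nsmul_eq_mul, nsmul_eq_mul]
      have h2 : (Finset.univ.filter (fun e : U => Sum.inr e ∈ X)).card = b := rfl
      have h3 : (Finset.univ.filter (fun e : U => ¬ Sum.inr e ∈ X)).card = cU - b := hnotb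
      rw [h2, h3]
      push_cast
      ring
    have hlast : ((cU - b : ℕ):ℝ) * ((a:ℝ) * ((1/M) * P)) ≤ ((cU - b : ℕ):ℝ) * P := by
      refine mul_le_mul_of_nonneg_left ?_ (by positivity)
      have haMr : (a:ℝ) ≤ M := by rw [hM]; exact_mod_cast haM
      calc (a:ℝ) * ((1/M) * P) = ((a:ℝ)/M) * P := by ring
        _ ≤ 1 * P := by
            refine mul_le_mul_of_nonneg_right ?_ hP0
            rw [div_le_one hM0]
            exact haMr
        _ = P := one_mul P
    linarith [hTbsum, hsumIte, claim1, claim2, hlast]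
  -- conclude
  have hsum1 : ∑ u, ∑ v, (G.fit X u / G.totalFit X) * G.w u v = 1 := by
    have h := G.sum_step_mul X (fun _ => (1:ℝ))
    simp only [mul_one] at h
    rw [← h, G.step_rowsum]
  have hsumP : ∑ u, ∑ v, (G.fit X u / G.totalFit X) * G.w u v * P = P := by
    calc ∑ u, ∑ v, (G.fit X u / G.totalFit X) * G.w u v * P
        = (∑ u, ∑ v, (G.fit X u / G.totalFit X) * G.w u v) * P := by
          rw [Finset.sum_mul]
          exact Finset.sum_congr rfl fun u _ => (Finset.sum_mul _ _ _).symm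
      _ = P := by rw [hsum1, one_mul]
  have hEQ : ∑ u, ∑ v, (G.fit X u / G.totalFit X) * G.w u v *
        phi 𝒮 qa qb (moranNext X u v)
      = (∑ u, ∑ v, (G.fit X u / G.totalFit X) * G.w u v * P)
        + (G.totalFit X)⁻¹ *
          ∑ u, ∑ v, G.fit X u * G.w u v * (phi 𝒮 qa qb (moranNext X u v) - P) := by
    rw [Finset.mul_sum, ← Finset.sum_add_distrib]
    refine Finset.sum_congr rfl fun u _ => ?_
    rw [Finset.mul_sum, ← Finset.sum_add_distrib]
    refine Finset.sum_congr rfl fun v _ => ?_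
    have hFne : (G.totalFit X) ≠ 0 := hF.ne'
    field_simp
    ring
  rw [hphiX, hEQ, hsumP]
  have : 0 ≤ (G.totalFit X)⁻¹ *
      ∑ u, ∑ v, G.fit X u * G.w u v * (phi 𝒮 qa qb (moranNext X u v) - P) :=
    mul_nonneg (inv_nonneg.mpr hF.le) main
  linarith

/-- If the seed set `S` covers the universe, then, with `α = ((x/n)/((x/n)+n))^n`, the
fixation probability in the Set Cover fitness graph is at least
`((y/n²)·α / (1 − (1 − y/n²)·α))^n`. -/
theorem fp_lower_of_cover {U : Type} [Fintype U] [DecidableEq U] [Nonempty U]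
    (𝒮 : Finset (Finset U)) (hne : ∀ A ∈ 𝒮, A.Nonempty) (hcov : ∀ e : U, ∃ A ∈ 𝒮, e ∈ A)
    (x y : ℝ) (hx : 1 ≤ x) (hy0 : 0 < y) (hy1 : y ≤ 1)
    (G : FitnessGraph ({A // A ∈ 𝒮} ⊕ U)) (hG : IsSetCoverGraph 𝒮 x y G)
    (S : Finset ({A // A ∈ 𝒮} ⊕ U))
    (hScov : ∀ e : U, ∃ A : {A // A ∈ 𝒮}, Sum.inl A ∈ S ∧ e ∈ A.1)
    (n : ℕ) (hn : n = Fintype.card ({A // A ∈ 𝒮} ⊕ U))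
    (α : ℝ) (hα : α = ((x / (n : ℝ)) / (x / (n : ℝ) + (n : ℝ))) ^ n) :
    ((y / (n : ℝ) ^ 2) * α / (1 - (1 - y / (n : ℝ) ^ 2) * α)) ^ n ≤ G.fp S := by
  classical
  haveI hNEU : Nonempty ({A // A ∈ 𝒮} ⊕ U) := ⟨Sum.inr (Classical.arbitrary U)⟩
  have hScard : 0 < 𝒮.card := by
    obtain ⟨A, hA, _⟩ := hcov (Classical.arbitrary U)
    exact Finset.card_pos.mpr ⟨A, hA⟩
  set cU := Fintype.card U with hcU
  have hncard : n = 𝒮.card + cU := by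
    rw [hn, Fintype.card_sum, Fintype.card_coe, hcU]
  set N : ℝ := ((𝒮.card + cU : ℕ) : ℝ) with hNdef
  have hnN : (n : ℝ) = N := by rw [hncard, hNdef]
  set M : ℝ := (𝒮.card : ℝ) with hMdef
  have hM1 : 1 ≤ M := by rw [hMdef]; exact_mod_cast hScard
  have hU1 : (1:ℝ) ≤ (cU : ℝ) := by
    have : 0 < cU := by rw [hcU]; exact Fintype.card_pos
    exact_mod_cast this
  have hNMU : N = M + (cU : ℝ) := by rw [hNdef, hMdef]; push_cast; ring
  have hN0 : 0 < N := by rw [hNMU]; linarith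
  have hMN : M ≤ N := by rw [hNMU]; linarith
  have hx0 : 0 < x := lt_of_lt_of_le one_pos hx
  have hxN0 : 0 < x + N := by linarith
  have hM0 : 0 < M := by linarith
  have hda : 0 < y*(x+N) + M*N := by positivity
  set qa : ℝ := y*(x+N) / (y*(x+N) + M*N) with hqa
  set qb : ℝ := x / (x+N) with hqb
  have hqb0 : 0 < qb := by rw [hqb]; exact div_pos hx0 hxN0
  have hqb1 : qb ≤ 1 := by rw [hqb]; exact div_le_one_of_le₀ (by linarith) hxN0.le
  have hqa0 : 0 < qa := by rw [hqa]; exact div_pos (by positivity) hda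
  have hqa1 : qa ≤ 1 := by
    rw [hqa]; refine div_le_one_of_le₀ ?_ hda.le; nlinarith
  -- apply the master lemma
  have hsub : ∀ X, phi 𝒮 qa qb X ≤ ∑ Y, G.step X Y * phi 𝒮 qa qb Y := fun X =>
    phi_subharmonic hne hcov hx hy0 hy1 hG N M hNdef hMdef qa qb hqa hqb X
  have key : phi 𝒮 qa qb S ≤ G.fp S :=
    G.le_fp_of_subharmonic (phi 𝒮 qa qb)
      (fun X => phi_nonneg qa qb hqa0.le hqb0.le X)
      (fun X => phi_le_one qa qb hqa0.le hqa1 hqb0.le hqb1 X)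
      (phi_empty qa qb) hsub S
  refine le_trans ?_ key
  -- now show the explicit bound is at most `phi S`
  rw [hnN] at hα ⊢
  set β : ℝ := (x / N) / (x / N + N) with hβdef
  have hxNN0 : 0 < x + N*N := by positivity
  have hβ : β = x / (x + N*N) := by
    have h1 : x/N + N = (x+N*N)/N := by rw [div_add' _ _ _ hN0.ne']
    rw [hβdef, h1, div_div_eq_mul_div, div_mul_cancel₀ _ hN0.ne']
  have hβ0 : 0 < β := by rw [hβ]; positivity
  have hβ1 : β < 1 := by
    rw [hβ, div_lt_one hxNN0]
    nlinarith
  have hn0 : n ≠ 0 := by omega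
  have hα0 : 0 < α := by rw [hα]; exact pow_pos hβ0 n
  have hαβ : α ≤ β := by
    rw [hα]
    exact pow_le_of_le_one hβ0.le hβ1.le hn0
  have hα1 : α < 1 := lt_of_le_of_lt hαβ hβ1
  set c : ℝ := y / N^2 with hc
  have hc0 : 0 < c := by rw [hc]; positivity
  have hc1 : c ≤ 1 := by
    rw [hc, div_le_one (by positivity)]
    nlinarith
  have hD0 : 0 < 1 - (1-c)*α := by
    have h := mul_le_of_le_one_left hα0.le (by linarith : 1 - c ≤ 1)
    linarith
  set q : ℝ := c * α / (1 - (1-c)*α) with hq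
  have hq0 : 0 ≤ q := by
    rw [hq]
    exact div_nonneg (by positivity) hD0.le
  have hcN : c * N = y / N := by
    rw [hc]
    field_simp
  -- key1 : (y/N)*α ≤ x*(1-α)
  have h1mβ : 1 - β = (N*N)/(x+N*N) := by rw [hβ]; field_simp; ring
  have hyN1 : y / N ≤ 1 := by
    rw [div_le_one hN0]; linarith
  have hNN1 : (1:ℝ) ≤ N*N := by nlinarith
  have key1 : (y/N)*α ≤ x*(1-α) := by
    have k1 : (y/N)*β ≤ x*(1-β) := by
      rw [h1mβ, hβ, ← mul_div_assoc, ← mul_div_assoc]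
      rw [div_le_div_iff₀ hxNN0 hxNN0]
      have h1 : (y/N)*x ≤ x := by
        have h := mul_le_mul_of_nonneg_right hyN1 hx0.le
        linarith
      have h2 : (y/N)*x*(x+N*N) ≤ x*(x+N*N) := mul_le_mul_of_nonneg_right h1 hxNN0.le
      have h3 : x*(x+N*N) ≤ x*(N*N)*(x+N*N) := by
        have ha := mul_le_mul_of_nonneg_left hNN1 hx0.le
        have hb := mul_le_mul_of_nonneg_right ha hxNN0.le
        linarith
      linarith
    have k2 : (y/N)*α ≤ (y/N)*β := mul_le_mul_of_nonneg_left hαβ (by positivity)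
    have k3 : x*(1-β) ≤ x*(1-α) := mul_le_mul_of_nonneg_left (by linarith) hx0.le
    linarith
  -- key2 : α ≤ (x+N)*(1-α)
  have key2 : α ≤ (x+N)*(1-α) := by
    have k1 : β ≤ (x+N)*(1-β) := by
      rw [h1mβ, hβ, ← mul_div_assoc]
      rw [div_le_div_iff₀ hxNN0 hxNN0]
      have h1 : x ≤ (x+N)*(N*N) := by
        have ha := mul_le_mul_of_nonneg_left hNN1 hx0.le
        have hb : (0:ℝ) ≤ N*(N*N) := by positivity
        nlinarith
      exact mul_le_mul_of_nonneg_right h1 hxNN0.le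
    have k3 : (x+N)*(1-β) ≤ (x+N)*(1-α) := mul_le_mul_of_nonneg_left (by linarith) hxN0.le
    linarith
  have hq_qb : q ≤ qb := by
    rw [hq, hqb, div_le_div_iff₀ hD0 hxN0]
    have e1 : c*α*(x+N) = c*x*α + (c*N)*α := by ring
    rw [e1, hcN]
    have e2 : x*(1-(1-c)*α) = c*x*α + x*(1-α) := by ring
    linarith [key1, e2]
  have hq_qa : q ≤ qa := by
    rw [hq, hqa, div_le_div_iff₀ hD0 hda]
    have e1 : c*α*(y*(x+N)+M*N) = c*y*(x+N)*α + (c*N)*M*α := by ring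
    rw [e1, hcN]
    have s1 : (y/N)*M*α ≤ y*α := by
      have h1 : (y/N)*M ≤ (y/N)*N := mul_le_mul_of_nonneg_left hMN (by positivity)
      have h2 : (y/N)*N = y := by field_simp
      calc (y/N)*M*α ≤ ((y/N)*N)*α := mul_le_mul_of_nonneg_right h1 hα0.le
        _ = y*α := by rw [h2]
    have s2 : y*α ≤ y*((x+N)*(1-α)) := mul_le_mul_of_nonneg_left key2 hy0.le
    have e2 : y*(x+N)*(1-(1-c)*α) = c*y*(x+N)*α + y*((x+N)*(1-α)) := by ring
    linarith [s1, s2, e2]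
  -- assemble the power chain
  have hCovS : Cov 𝒮 S := hScov
  have hphiS : phi 𝒮 qa qb S = qa ^ (𝒮.card - nA 𝒮 S) * qb ^ (cU - nB 𝒮 S) := by
    rw [phi, if_pos hCovS]
  calc q ^ n = q ^ 𝒮.card * q ^ cU := by rw [← pow_add, ← hncard]
    _ ≤ qa ^ 𝒮.card * qb ^ cU :=
        mul_le_mul (pow_le_pow_left₀ hq0 hq_qa _) (pow_le_pow_left₀ hq0 hq_qb _)
          (pow_nonneg hq0 _) (pow_nonneg hqa0.le _)
    _ ≤ qa ^ (𝒮.card - nA 𝒮 S) * qb ^ (cU - nB 𝒮 S) :=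
        mul_le_mul (pow_le_pow_of_le_one hqa0.le hqa1 (Nat.sub_le _ _))
          (pow_le_pow_of_le_one hqb0.le hqb1 (Nat.sub_le _ _))
          (pow_nonneg hqb0.le _) (pow_nonneg hqa0.le _)
    _ = phi 𝒮 qa qb S := hphiS.symm
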